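/- Let d ∈ ℕ and δ ∈ (0, π/2), and suppose N_{d,δ} > 0. Define F_{d,δ}(x) = ∫_{−π}^{π} M_{d,δ}(x') H(x − x') dx'. Then for every x ∈ ℝ one has −2π/N_{d,δ} ≤ F_{d,δ}(x) ≤ 1 + 4π/N_{d,δ}. -/
import Mathlib


open Real Classical

/-- The 2π-periodic Heaviside function: `H(x) = 1` for `x ∈ [2kπ, (2k+1)π)` and
`H(x) = 0` for `x ∈ [(2k−1)π, 2kπ)`, `k ∈ ℤ`. -/
noncomputable def Hper (x : ℝ) : ℝ :=
  if ∃ k : ℤ, 2 * k * π ≤ x ∧ x < (2 * k + 1) * π then 1 else 0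

/-- `g_{d,δ}(x) = T_d(1 + 2(cos x − cos δ)/(1 + cos δ))`. -/
noncomputable def chebG (d : ℕ) (δ x : ℝ) : ℝ :=
  (Polynomial.Chebyshev.T ℝ d).eval (1 + 2 * (Real.cos x - Real.cos δ) / (1 + Real.cos δ))

/-- `N_{d,δ} = ∫_{−π}^{π} g_{d,δ}(x) dx`. -/
noncomputable def chebN (d : ℕ) (δ : ℝ) : ℝ := ∫ x in (-π)..π, chebG d δ x

/-- `M_{d,δ} = g_{d,δ}/N_{d,δ}`. -/
noncomputable def chebM (d : ℕ) (δ x : ℝ) : ℝ := chebG d δ x / chebN d δ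

lemma exists_cosh_eq {u : ℝ} (hu : 1 ≤ u) : ∃ t : ℝ, Real.cosh t = u := by
  set s := Real.sqrt (u ^ 2 - 1) with hs
  have hs2 : s ^ 2 = u ^ 2 - 1 := Real.sq_sqrt (by nlinarith)
  have hsnn : 0 ≤ s := Real.sqrt_nonneg _
  have hpos : 0 < u + s := by nlinarith
  refine ⟨Real.log (u + s), ?_⟩
  rw [Real.cosh_log hpos]
  have hinv : (u + s)⁻¹ = u - s := by
    have h1 : (u + s) * (u - s) = 1 := by nlinarith
    field_simp
    nlinarith
  rw [hinv]; ring

lemma T_eval_cosh (n : ℤ) (t : ℝ) :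
    (Polynomial.Chebyshev.T ℝ n).eval (Real.cosh t) = Real.cosh (n * t) := by
  have h : (((Polynomial.Chebyshev.T ℝ n).eval (Real.cosh t) : ℝ) : ℂ)
      = ((Real.cosh (n * t) : ℝ) : ℂ) := by
    rw [Polynomial.Chebyshev.complex_ofReal_eval_T, Complex.ofReal_cosh,
      ← Complex.cos_mul_I, Polynomial.Chebyshev.T_complex_cos, Complex.ofReal_cosh,
      ← Complex.cos_mul_I]
    norm_cast
    push_cast
    ring_nf
  exact_mod_cast h

lemma T_eval_ge_neg_one {u : ℝ} (n : ℤ) (hu : -1 ≤ u) :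
    -1 ≤ (Polynomial.Chebyshev.T ℝ n).eval u := by
  rcases le_or_gt u 1 with h1 | h1
  · have : u = Real.cos (Real.arccos u) := (Real.cos_arccos hu h1).symm
    rw [this, Polynomial.Chebyshev.T_real_cos]
    exact Real.neg_one_le_cos _
  · obtain ⟨t, ht⟩ := exists_cosh_eq h1.le
    rw [← ht, T_eval_cosh]
    linarith [Real.one_le_cosh ((n : ℝ) * t)]

lemma chebG_ge_neg_one (d : ℕ) (δ : ℝ) (hδ : δ ∈ Set.Ioo 0 (π / 2)) (y : ℝ) :
    -1 ≤ chebG d δ y := by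
  have hcosδ : 0 < Real.cos δ := Real.cos_pos_of_mem_Ioo
    ⟨by linarith [hδ.1, Real.pi_pos], hδ.2⟩
  apply T_eval_ge_neg_one
  have h1 : (-1 : ℝ) ≤ Real.cos y := Real.neg_one_le_cos y
  have h2 : 0 < 1 + Real.cos δ := by linarith
  have h3 : -2 ≤ 2 * (Real.cos y - Real.cos δ) / (1 + Real.cos δ) := by
    rw [le_div_iff₀ h2]
    nlinarith
  linarith

lemma Hper_mem (y : ℝ) : Hper y = 0 ∨ Hper y = 1 := by
  unfold Hper; split <;> simp

lemma measurable_Hper : Measurable Hper := by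
  have : Hper = Set.indicator (⋃ k : ℤ, Set.Ico (2 * (k : ℝ) * π) ((2 * (k : ℝ) + 1) * π))
      (fun _ => (1 : ℝ)) := by
    funext y
    unfold Hper
    by_cases h : ∃ k : ℤ, 2 * (k : ℝ) * π ≤ y ∧ y < (2 * (k : ℝ) + 1) * π
    · rw [if_pos h, Set.indicator_of_mem]
      simpa [Set.mem_iUnion, Set.mem_Ico] using h
    · rw [if_neg h, Set.indicator_of_notMem]
      simpa [Set.mem_iUnion, Set.mem_Ico] using h
  rw [this]
  exact (measurable_const.indicator (MeasurableSet.iUnion fun k => measurableSet_Ico))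

theorem stmt_6 (d : ℕ) (δ : ℝ) (hδ : δ ∈ Set.Ioo 0 (π / 2)) (hN : 0 < chebN d δ)
    (x : ℝ) :
    -(2 * π) / chebN d δ ≤ (∫ x' in (-π)..π, chebM d δ x' * Hper (x - x')) ∧
    (∫ x' in (-π)..π, chebM d δ x' * Hper (x - x')) ≤ 1 + 4 * π / chebN d δ := by
  have hπ : 0 < π := Real.pi_pos
  have hGcont : Continuous (chebG d δ) := by
    unfold chebG
    exact (Polynomial.Chebyshev.T ℝ d).continuous.comp
      (continuous_const.add ((continuous_const.mul
        (Real.continuous_cos.sub continuous_const)).div_const _))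
  set f : ℝ → ℝ := fun x' => chebG d δ x' * Hper (x - x') with hf
  have hH01 : ∀ y, Hper y = 0 ∨ Hper y = 1 := Hper_mem
  have hGlb : ∀ y, -1 ≤ chebG d δ y := chebG_ge_neg_one d δ hδ
  have hflb : ∀ x', -1 ≤ f x' := by
    intro x'
    rcases hH01 (x - x') with h | h
    · simp only [hf, h, mul_zero]; norm_num
    · simp only [hf, h, mul_one]; exact hGlb x'
  have hfub : ∀ x', f x' ≤ chebG d δ x' + 1 := by
    intro x'
    rcases hH01 (x - x') with h | h
    · simp only [hf, h, mul_zero]; linarith [hGlb x']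
    · simp only [hf, h, mul_one]; linarith
  have hGint : IntervalIntegrable (chebG d δ) MeasureTheory.volume (-π) π :=
    hGcont.intervalIntegrable _ _
  have hfmeas : Measurable f :=
    hGcont.measurable.mul (measurable_Hper.comp (measurable_const.sub measurable_id))
  have hfint : IntervalIntegrable f MeasureTheory.volume (-π) π := by
    apply hGint.mono_fun hfmeas.aestronglyMeasurable
    filter_upwards with x'
    rcases hH01 (x - x') with h | h <;> simp [hf, h, abs_nonneg]
  have hab : (-π : ℝ) ≤ π := by linarith
  have hlow : -(2 * π) ≤ ∫ x' in (-π)..π, f x' := by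
    have h := intervalIntegral.integral_mono_on hab
      (intervalIntegrable_const (c := (-1 : ℝ))) hfint (fun x' _ => hflb x')
    have hc : (∫ _x in (-π)..π, (-1 : ℝ)) = -(2 * π) := by
      rw [intervalIntegral.integral_const, smul_eq_mul]; ring
    linarith
  have hup : (∫ x' in (-π)..π, f x') ≤ chebN d δ + 2 * π := by
    have := intervalIntegral.integral_mono_on hab hfint
      (hGint.add (intervalIntegrable_const (c := (1 : ℝ)))) (fun x' _ => hfub x')
    have heq : (∫ x' in (-π)..π, (chebG d δ x' + 1)) = chebN d δ + 2 * π := by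
      rw [intervalIntegral.integral_add hGint (intervalIntegrable_const (c := (1 : ℝ)))]
      simp [chebN]
      ring
    linarith [this, heq.symm.le]
  have hFeq : (∫ x' in (-π)..π, chebM d δ x' * Hper (x - x'))
      = (∫ x' in (-π)..π, f x') / chebN d δ := by
    rw [← intervalIntegral.integral_div]
    congr 1
    funext x'
    simp [chebM, hf]
    ring
  rw [hFeq]
  constructor
  · exact (div_le_div_iff_of_pos_right hN).mpr hlow
  · have h1 : (∫ x' in (-π)..π, f x') / chebN d δ ≤ (chebN d δ + 4 * π) / chebN d δ :=
      (div_le_div_iff_of_pos_right hN).mpr (by linarith)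
    have h2 : (chebN d δ + 4 * π) / chebN d δ = 1 + 4 * π / chebN d δ := by
      field_simp
    linarith
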